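/- For every k ≥ 2, with C_k = 2 + 3/(2k), the following bounds hold for all n ≥ 2: |α_n − (2k−1)^{n−1}/(2k)| ≤ C_k, |β_n − (2k−1)^{n−1}/(2k)| ≤ C_k, and |γ_n − (2k−1)^{n−1}/(2k)| ≤ C_k. -/

import Mathlib

/-!
Common setup: `Fk k` is the free group `F_k` on `k` generators; letters of the
alphabet `S_k = {g_1,…,g_k,g_1⁻¹,…,g_k⁻¹}` are encoded as pairs in `Fin k × Bool`
(`(i, true)` is `g_{i+1}`, `(i, false)` is `g_{i+1}⁻¹`); `wlen u` is the length of the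
unique reduced word representing `u`; `words k n` is the (finite) set of elements of
length `n`; `w k n` is `w_n`, the sum of all reduced words of length `n` in the group
algebra `ℂ[F_k] = MonoidAlgebra ℂ (Fk k)`.
-/

open scoped BigOperators

noncomputable section

abbrev Fk (k : ℕ) := FreeGroup (Fin k)

/-- The length `|u|` of the unique reduced word representing `u`. -/
def wlen {k : ℕ} (u : Fk k) : ℕ := (FreeGroup.toWord u).length

/-- The `Finset` of all elements of `F_k` whose reduced word has length `n`,
realized as the images of the reduced lists of letters of length `n`. -/
def words (k n : ℕ) : Finset (Fk k) :=
  (Finset.univ.filter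
      (fun v : List.Vector (Fin k × Bool) n => FreeGroup.reduce v.toList = v.toList)).image
    (fun v => FreeGroup.mk v.toList)

/-- `w_n`: the sum of all reduced words of length `n` in the group algebra `ℂ[F_k]`. -/
def w (k n : ℕ) : MonoidAlgebra ℂ (Fk k) :=
  ∑ u ∈ words k n, MonoidAlgebra.of ℂ (Fk k) u

/-- The first letter of the reduced word representing `u` (if any). -/
def firstLetter {k : ℕ} (u : Fk k) : Option (Fin k × Bool) := (FreeGroup.toWord u).head?

/-- The last letter of the reduced word representing `u` (if any). -/
def lastLetter {k : ℕ} (u : Fk k) : Option (Fin k × Bool) := (FreeGroup.toWord u).getLast?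

/-- The inverse of a letter. -/
def linv {k : ℕ} (a : Fin k × Bool) : Fin k × Bool := (a.1, !a.2)

/-- The set of reduced words of length `n` beginning with the letter `x` and ending with
the letter `y`. -/
def wordsXY (k n : ℕ) (x y : Fin k × Bool) : Finset (Fk k) :=
  (words k n).filter (fun u => firstLetter u = some x ∧ lastLetter u = some y)

/-- `ν_n(x,y)`: the number of reduced words of length `n` beginning with `x`, ending with `y`. -/
def nu (k n : ℕ) (x y : Fin k × Bool) : ℕ := (wordsXY k n x y).card

/-- `w_n(x,y)`: the sum of all reduced words of length `n` beginning with `x` and ending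
with `y`, in `ℂ[F_k]`. -/
def wXY (k n : ℕ) (x y : Fin k × Bool) : MonoidAlgebra ℂ (Fk k) :=
  ∑ u ∈ wordsXY k n x y, MonoidAlgebra.of ℂ (Fk k) u

/-- `ν_n(σ,τ)`: the number of reduced words of length `n` whose first letter lies in `σ`
and whose last letter lies in `τ`. -/
def nuS (k n : ℕ) (σ τ : Finset (Fin k × Bool)) : ℕ :=
  ((words k n).filter
    (fun u => (∃ a ∈ σ, firstLetter u = some a) ∧ (∃ b ∈ τ, lastLetter u = some b))).card

/-- The inner product `⟨a,b⟩ = Σ_g a_g conj(b_g)` on a group algebra. -/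
def inn {Γ : Type*} [Group Γ] (a b : MonoidAlgebra ℂ Γ) : ℂ :=
  ∑ g ∈ a.coeff.support, a.coeff g * (starRingEnd ℂ) (b.coeff g)

/-- `‖a‖₂² = ⟨a,a⟩ = Σ_g |a_g|²`. -/
def n2sq {Γ : Type*} [Group Γ] (a : MonoidAlgebra ℂ Γ) : ℝ :=
  ∑ g ∈ a.coeff.support, Complex.normSq (a.coeff g)

/-- `‖a‖₂ = ⟨a,a⟩^{1/2}`. -/
def n2 {Γ : Type*} [Group Γ] (a : MonoidAlgebra ℂ Γ) : ℝ := Real.sqrt (n2sq a)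

/-- The conditional expectation onto the Laplacian masa, restricted to `ℂ[F_k]`:
`E(a) = Σ_{n ≥ 0} (⟨a,w_n⟩ / ‖w_n‖₂²) w_n` (a finite sum for each `a`). -/
def Ee {k : ℕ} (a : MonoidAlgebra ℂ (Fk k)) : MonoidAlgebra ℂ (Fk k) :=
  ∑ᶠ n : ℕ, (inn a (w k n) / (n2sq (w k n) : ℂ)) • w k n

/-- `α_n = ν_n(g₁,g₂)`. -/
def alph (k n : ℕ) (hk : 2 ≤ k) : ℕ :=
  nu k n ((⟨0, by omega⟩ : Fin k), true) ((⟨1, by omega⟩ : Fin k), true)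

/-- `β_n = ν_n(g₁,g₁)`. -/
def bet (k n : ℕ) (hk : 2 ≤ k) : ℕ :=
  nu k n ((⟨0, by omega⟩ : Fin k), true) ((⟨0, by omega⟩ : Fin k), true)

/-- `γ_n = ν_n(g₁,g₁⁻¹)`. -/
def gam (k n : ℕ) (hk : 2 ≤ k) : ℕ :=
  nu k n ((⟨0, by omega⟩ : Fin k), true) ((⟨0, by omega⟩ : Fin k), false)

/-! ### Auxiliary development -/

def NRel {k : ℕ} (a b : Fin k × Bool) : Prop := ¬(a.1 = b.1 ∧ a.2 = !b.2)

instance {k : ℕ} : DecidableRel (NRel (k := k)) := fun _ _ => by unfold NRel; infer_instance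

theorem reduce_eq_self_iff {k : ℕ} (l : List (Fin k × Bool)) :
    FreeGroup.reduce l = l ↔ List.IsChain NRel l := by
  constructor
  · induction l with
    | nil => intro _; exact List.isChain_nil
    | cons a t ih =>
      intro h
      rw [FreeGroup.reduce.cons] at h
      rcases hr : FreeGroup.reduce t with _ | ⟨hd, tl⟩
      · rw [hr] at h
        simp only at h
        have : t = [] := by
          injection h with _ h2
          exact h2.symm
        subst this; simp
      · rw [hr] at h
        simp only at h
        by_cases hc : a.1 = hd.1 ∧ a.2 = !hd.2
        · rw [if_pos hc] at h
          exfalso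
          have h1 : tl.length = t.length + 1 := by
            have := congrArg List.length h; simpa using this
          have h2 : (hd :: tl).length ≤ t.length :=
            (FreeGroup.Red.length_le (hr ▸ FreeGroup.reduce.red))
          simp at h2; omega
        · rw [if_neg hc] at h
          have ht : t = hd :: tl := by
            injection h with _ h2
            exact h2.symm
          have hred : FreeGroup.reduce t = t := by rw [hr, ht]
          have := ih hred
          rw [ht]
          exact List.IsChain.cons_cons (by exact hc) (ht ▸ this)
  · induction l with
    | nil => intro _; rfl
    | cons a t ih =>
      intro h
      rw [List.isChain_cons] at h
      rw [FreeGroup.reduce.cons, ih h.2]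
      rcases t with _ | ⟨hd, tl⟩
      · rfl
      · simp only
        rw [if_neg]
        exact h.1 hd rfl

/-- The set of reduced letter-vectors of length `n` with given first and last letters. -/
def cntA (k n : ℕ) (x y : Fin k × Bool) : Finset (List.Vector (Fin k × Bool) n) :=
  Finset.univ.filter
    (fun v => List.IsChain NRel v.toList ∧ v.toList.head? = some x ∧ v.toList.getLast? = some y)

theorem nu_eq_card (k n : ℕ) (x y : Fin k × Bool) : nu k n x y = (cntA k n x y).card := by
  unfold nu wordsXY words
  rw [Finset.filter_image, Finset.filter_filter, Finset.card_image_of_injOn]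
  · congr 1
    ext v
    simp only [Finset.mem_filter, Finset.mem_univ, true_and, cntA]
    constructor
    · rintro ⟨hred, h1, h2⟩
      refine ⟨(reduce_eq_self_iff _).1 hred, ?_, ?_⟩
      · simpa [firstLetter, FreeGroup.toWord_mk, hred] using h1
      · simpa [lastLetter, FreeGroup.toWord_mk, hred] using h2
    · rintro ⟨hch, h1, h2⟩
      have hred := (reduce_eq_self_iff _).2 hch
      exact ⟨hred, by simpa [firstLetter, FreeGroup.toWord_mk, hred],
        by simpa [lastLetter, FreeGroup.toWord_mk, hred]⟩
  · intro u hu v hv huv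
    simp only [Finset.coe_filter, Set.mem_setOf_eq, Finset.mem_univ, true_and] at hu hv
    have h : FreeGroup.reduce u.toList = FreeGroup.reduce v.toList := by
      simpa [FreeGroup.toWord_mk] using congrArg FreeGroup.toWord huv
    exact List.Vector.toList_injective (by rwa [hu.1, hv.1] at h)

theorem cntA_one (k : ℕ) (x y : Fin k × Bool) :
    (cntA k 1 x y).card = if x = y then 1 else 0 := by
  have hmem : ∀ v : List.Vector (Fin k × Bool) 1,
      v ∈ cntA k 1 x y ↔ v.head = x ∧ v.head = y := by
    intro v
    simp [cntA, List.Vector.toList_singleton v]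
  split_ifs with hxy
  · subst hxy
    have : cntA k 1 x x = {x ::ᵥ List.Vector.nil} := by
      ext v
      rw [hmem, Finset.mem_singleton]
      constructor
      · rintro ⟨h, -⟩
        rw [← v.cons_head_tail, h, v.tail.eq_nil]
      · rintro rfl; simp
    rw [this, Finset.card_singleton]
  · rw [Finset.card_eq_zero, Finset.eq_empty_iff_forall_notMem]
    intro v hv
    rw [hmem] at hv
    exact hxy (hv.1.symm.trans hv.2)

/-- Reduced vectors of length `n` with last letter `y` (any first letter). -/
def cntB (k n : ℕ) (y : Fin k × Bool) : Finset (List.Vector (Fin k × Bool) n) :=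
  Finset.univ.filter
    (fun w => List.IsChain NRel w.toList ∧ w.toList.getLast? = some y)

theorem cntB_filter_head (k m : ℕ) (y z : Fin k × Bool) :
    (cntB k (m + 1) y).filter (fun w => w.head = z) = cntA k (m + 1) z y := by
  ext w
  simp [cntB, cntA, List.Vector.head?_toList]
  tauto

theorem cntB_card (k m : ℕ) (y : Fin k × Bool) :
    (cntB k (m + 1) y).card = ∑ z : Fin k × Bool, (cntA k (m + 1) z y).card := by
  rw [Finset.card_eq_sum_card_fiberwise
    (f := fun w : List.Vector (Fin k × Bool) (m + 1) => w.head) (t := Finset.univ)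
    (fun x _ => Finset.mem_univ _)]
  exact Finset.sum_congr rfl fun z _ => by rw [cntB_filter_head]

theorem getLast?_cons_of_ne_nil' {α : Type*} (a : α) {l : List α} (h : l ≠ []) :
    (a :: l).getLast? = l.getLast? := by
  cases l with
  | nil => exact absurd rfl h
  | cons b t => exact List.getLast?_cons_cons

theorem cntA_succ_card (k m : ℕ) (x y : Fin k × Bool) :
    (cntA k (m + 2) x y).card =
      ((cntB k (m + 1) y).filter (fun w => ¬ w.head = (x.1, !x.2))).card := by
  apply Finset.card_nbij' (fun v => v.tail) (fun w => x ::ᵥ w)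
  · intro v hv
    simp only [cntA, Finset.mem_coe, Finset.mem_filter, Finset.mem_univ, true_and] at hv
    obtain ⟨hch, hh, hl⟩ := hv
    have hvl : v.toList = v.head :: v.tail.toList := by
      rw [← List.Vector.toList_cons, v.cons_head_tail]
    have hx : v.head = x := by
      rw [hvl] at hh; simpa using hh
    have htl : v.tail.toList = v.tail.head :: v.tail.tail.toList := by
      rw [← List.Vector.toList_cons, v.tail.cons_head_tail]
    have hne : v.tail.toList ≠ [] := by rw [htl]; exact List.cons_ne_nil _ _
    rw [hvl, List.isChain_cons] at hch
    simp only [cntB, Finset.mem_coe, Finset.mem_filter, Finset.mem_univ, true_and]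
    refine ⟨⟨hch.2, ?_⟩, ?_⟩
    · rw [hvl, getLast?_cons_of_ne_nil' _ hne] at hl; exact hl
    · intro hhead
      have hmem : v.tail.head ∈ v.tail.toList.head? := by
        simp [List.Vector.head?_toList]
      have hrel := hch.1 v.tail.head hmem
      apply hrel
      rw [hx, hhead]
      exact ⟨rfl, by simp⟩
  · intro w hw
    simp only [cntB, Finset.mem_coe, Finset.mem_filter, Finset.mem_univ, true_and] at hw
    obtain ⟨⟨hch, hl⟩, hne⟩ := hw
    simp only [cntA, Finset.mem_coe, Finset.mem_filter, Finset.mem_univ, true_and,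
      List.Vector.toList_cons]
    have htl : w.toList = w.head :: w.tail.toList := by
      rw [← List.Vector.toList_cons, w.cons_head_tail]
    have hnil : w.toList ≠ [] := by rw [htl]; exact List.cons_ne_nil _ _
    refine ⟨?_, rfl, ?_⟩
    · rw [List.isChain_cons]
      refine ⟨?_, hch⟩
      intro b hb
      rw [List.Vector.head?_toList] at hb
      have hb' : w.head = b := by injection hb
      intro he
      apply hne
      rw [hb']
      exact Prod.ext he.1.symm (by rw [he.2]; simp)
    · rw [getLast?_cons_of_ne_nil' _ hnil]; exact hl
  · intro v hv
    simp only [cntA, Finset.mem_coe, Finset.mem_filter, Finset.mem_univ, true_and] at hv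
    have hvl : v.toList = v.head :: v.tail.toList := by
      rw [← List.Vector.toList_cons, v.cons_head_tail]
    obtain ⟨hch, hh, hl⟩ := hv
    have hx : v.head = x := by
      rw [hvl] at hh; simpa using hh
    rw [← hx]; exact v.cons_head_tail
  · intro w _
    exact List.Vector.tail_cons x w

theorem key_identity (k m : ℕ) (x y : Fin k × Bool) :
    nu k (m + 2) x y + nu k (m + 1) (x.1, !x.2) y = ∑ z : Fin k × Bool, nu k (m + 1) z y := by
  simp only [nu_eq_card]
  rw [cntA_succ_card, ← cntB_card k m y, ← cntB_filter_head k m y (x.1, !x.2), add_comm]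
  exact Finset.card_filter_add_card_filter_not _

theorem nu_total (k : ℕ) (hk : 1 ≤ k) (y : Fin k × Bool) (m : ℕ) :
    ∑ z : Fin k × Bool, nu k (m + 1) z y = (2 * k - 1) ^ m := by
  induction m with
  | zero => simp [nu_eq_card, cntA_one]
  | succ m ih =>
    show (∑ z : Fin k × Bool, nu k (m + 2) z y) = (2 * k - 1) ^ (m + 1)
    have hbij : Function.Bijective (fun x : Fin k × Bool => ((x.1, !x.2) : Fin k × Bool)) :=
      Function.Involutive.bijective (fun x => by simp)
    have hsum2 : ∑ x : Fin k × Bool, nu k (m + 1) (x.1, !x.2) y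
        = ∑ z : Fin k × Bool, nu k (m + 1) z y :=
      Fintype.sum_bijective _ hbij _ _ (fun x => rfl)
    have h1 : (∑ x : Fin k × Bool, nu k (m + 2) x y) + (2 * k - 1) ^ m
        = 2 * k * (2 * k - 1) ^ m := by
      calc (∑ x : Fin k × Bool, nu k (m + 2) x y) + (2 * k - 1) ^ m
          = ∑ x : Fin k × Bool, (nu k (m + 2) x y + nu k (m + 1) (x.1, !x.2) y) := by
            rw [Finset.sum_add_distrib, hsum2, ih]
        _ = ∑ _x : Fin k × Bool, ∑ z : Fin k × Bool, nu k (m + 1) z y :=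
            Finset.sum_congr rfl fun x _ => key_identity k m x y
        _ = 2 * k * (2 * k - 1) ^ m := by
            rw [Finset.sum_const, ih, Finset.card_univ, Fintype.card_prod, Fintype.card_fin,
              Fintype.card_bool, smul_eq_mul]
            ring
    have h2 : (2 * k - 1) ^ (m + 1) + (2 * k - 1) ^ m = 2 * k * (2 * k - 1) ^ m := by
      rw [pow_succ]
      have : (2 * k - 1) ^ m * (2 * k - 1) + (2 * k - 1) ^ m * 1
          = (2 * k - 1) ^ m * (2 * k - 1 + 1) := by ring
      rw [mul_one] at this
      rw [this, Nat.sub_add_cancel (by omega)]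
      ring
    omega

theorem nu_bound (k : ℕ) (hk : 2 ≤ k) :
    ∀ n, 2 ≤ n → ∀ x y : Fin k × Bool,
      |(nu k n x y : ℝ) - (2 * (k : ℝ) - 1) ^ (n - 1) / (2 * k)| ≤ 1 := by
  have hk0 : (0 : ℝ) < 2 * (k : ℝ) := by positivity
  have hq0 : (0 : ℝ) ≤ 2 * (k : ℝ) - 1 := by
    have : (2 : ℝ) ≤ (k : ℝ) := by exact_mod_cast hk
    linarith
  have hcast : ∀ m : ℕ, ((2 * k - 1 : ℕ) ^ m : ℝ) = (2 * (k : ℝ) - 1) ^ m := by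
    intro m
    push_cast [Nat.cast_sub (by omega : 1 ≤ 2 * k)]
    ring_nf
  intro n hn
  induction n, hn using Nat.le_induction with
  | base =>
    intro x y
    have hid := key_identity k 0 x y
    rw [nu_total k (by omega) y 0] at hid
    norm_num at hid
    have h01 : nu k 2 x y ≤ 1 := by omega
    have hr : (nu k 2 x y : ℝ) ≤ 1 := by exact_mod_cast h01
    have hr0 : (0 : ℝ) ≤ (nu k 2 x y : ℝ) := Nat.cast_nonneg _
    have hb0 : (0 : ℝ) ≤ (2 * (k : ℝ) - 1) ^ (2 - 1) / (2 * k) := by positivity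
    have hb1 : (2 * (k : ℝ) - 1) ^ (2 - 1) / (2 * k) ≤ 1 := by
      rw [div_le_one hk0]
      norm_num
    rw [abs_le]
    constructor <;> linarith
  | succ n hn ih =>
    intro x y
    obtain ⟨m, rfl⟩ : ∃ m, n = m + 1 := ⟨n - 1, by omega⟩
    have hid := key_identity k m x y
    rw [nu_total k (by omega) y m] at hid
    have hidr : (nu k (m + 2) x y : ℝ) + (nu k (m + 1) (x.1, !x.2) y : ℝ)
        = (2 * (k : ℝ) - 1) ^ m := by
      rw [← hcast m]
      exact_mod_cast hid
    have hexp : (m + 1 + 1 - 1) = m + 1 := by omega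
    have hexp2 : (m + 1 - 1) = m := by omega
    rw [hexp]
    have hrw : (nu k (m + 2) x y : ℝ) - (2 * (k : ℝ) - 1) ^ (m + 1) / (2 * k)
        = -((nu k (m + 1) (x.1, !x.2) y : ℝ) - (2 * (k : ℝ) - 1) ^ m / (2 * k)) := by
      have hne : (2 * (k : ℝ)) ≠ 0 := ne_of_gt hk0
      field_simp
      rw [pow_succ]
      nlinarith [hidr]
    show |(nu k (m + 2) x y : ℝ) - (2 * (k : ℝ) - 1) ^ (m + 1) / (2 * k)| ≤ 1
    rw [hrw, abs_neg]
    have hih := ih (x.1, !x.2) y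
    rw [hexp2] at hih
    exact hih

/-- for `k ≥ 2`, with `C_k = 2 + 3/(2k)`, for all `n ≥ 2`:
`|α_n − (2k−1)^{n−1}/(2k)| ≤ C_k`, `|β_n − (2k−1)^{n−1}/(2k)| ≤ C_k`, and
`|γ_n − (2k−1)^{n−1}/(2k)| ≤ C_k`. -/
theorem greek_Ck_bounds (k : ℕ) (hk : 2 ≤ k) (n : ℕ) (hn : 2 ≤ n) :
    |(alph k n hk : ℝ) - (2 * (k : ℝ) - 1) ^ (n - 1) / (2 * k)| ≤ 2 + 3 / (2 * k) ∧
    |(bet k n hk : ℝ) - (2 * (k : ℝ) - 1) ^ (n - 1) / (2 * k)| ≤ 2 + 3 / (2 * k) ∧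
    |(gam k n hk : ℝ) - (2 * (k : ℝ) - 1) ^ (n - 1) / (2 * k)| ≤ 2 + 3 / (2 * k) := by
  have h1 : (1 : ℝ) ≤ 2 + 3 / (2 * (k : ℝ)) := by
    have h0 : (0 : ℝ) ≤ 3 / (2 * (k : ℝ)) := by positivity
    linarith
  refine ⟨?_, ?_, ?_⟩ <;>
  · simp only [alph, bet, gam]
    exact le_trans (nu_bound k hk n hn _ _) h1

end
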